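/- For every integer n ≥ 2, the n×n integer matrix A indexed by {0,1,…,n−1} defined by A₀₀ = n−2; A₀ⱼ = Aⱼ₀ = n−1 for 1 ≤ j ≤ n−1; A₁₁ = n; Aᵢᵢ = n+1 for 2 ≤ i ≤ n−1; and Aᵢⱼ = n for all 1 ≤ i ≠ j ≤ n−1, satisfies det A = −1. -/

import Mathlib

/-- The linking matrix of the framed link L(n-2, n, n+1, …, n+1):
diagonal entries n-2, n, n+1, …, n+1; first row/column off-diagonal n-1;
other off-diagonal entries n. Its determinant is -1. -/
theorem stmt_0 (n : ℕ) (hn : 2 ≤ n)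
    (A : Matrix (Fin n) (Fin n) ℤ)
    (hA : ∀ i j : Fin n,
      A i j =
        if (i : ℕ) = 0 ∧ (j : ℕ) = 0 then (n : ℤ) - 2
        else if (i : ℕ) = 0 ∨ (j : ℕ) = 0 then (n : ℤ) - 1
        else if i = j then (if (i : ℕ) = 1 then (n : ℤ) else (n : ℤ) + 1)
        else (n : ℤ)) :
    A.det = -1 := by
  have h0 : 0 < n := by omega
  have h1 : 1 < n := by omega
  set k0 : Fin n := ⟨0, h0⟩ with hk0
  set k1 : Fin n := ⟨1, h1⟩ with hk1
  -- B : result of subtracting row 0 from every other row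
  set B : Matrix (Fin n) (Fin n) ℤ := fun i j =>
    if (i : ℕ) = 0 then (if (j : ℕ) = 0 then (n : ℤ) - 2 else (n : ℤ) - 1)
    else (if i = j ∧ 2 ≤ (i : ℕ) then 2 else 1) with hB
  -- C : result of subtracting multiples of row 1 of B
  set C : Matrix (Fin n) (Fin n) ℤ := fun i j =>
    if (i : ℕ) = 0 then (if (j : ℕ) = 0 then -1 else 0)
    else if (i : ℕ) = 1 then 1
    else (if i = j then 1 else 0) with hC
  set D : Matrix (Fin n) (Fin n) ℤ :=
    Matrix.diagonal (fun i => if (i : ℕ) = 0 then -1 else 1) with hD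
  have hAB : A.det = B.det := by
    apply Matrix.det_eq_of_forall_row_eq_smul_add_const
      (fun i : Fin n => if (i : ℕ) = 0 then (0:ℤ) else 1) k0
    · simp [hk0]
    · intro i j
      rw [hA]
      have hiv : (i : ℕ) < n := i.isLt
      have hjv : (j : ℕ) < n := j.isLt
      have hij : i = j ↔ (i : ℕ) = (j : ℕ) := Fin.ext_iff
      simp only [hB, hk0]
      by_cases hi : (i : ℕ) = 0 <;> by_cases hj : (j : ℕ) = 0 <;>
        simp_all <;> omega
  have hBC : B.det = C.det := by
    apply Matrix.det_eq_of_forall_row_eq_smul_add_const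
      (fun i : Fin n => if (i : ℕ) = 1 then (0:ℤ) else if (i : ℕ) = 0 then (n : ℤ) - 1 else 1) k1
    · simp [hk1]
    · intro i j
      have hC1 : ∀ j : Fin n, C k1 j = 1 := by
        intro j; simp [hC, hk1]
      rw [hC1]
      simp only [hB, hC]
      have hij : i = j ↔ (i : ℕ) = (j : ℕ) := Fin.ext_iff
      by_cases hi : (i : ℕ) = 0 <;> by_cases hi1 : (i : ℕ) = 1 <;>
        simp_all <;> omega
  have hCD : C.det = D.det := by
    rw [← Matrix.det_transpose C, ← Matrix.det_transpose D]
    apply Matrix.det_eq_of_forall_row_eq_smul_add_const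
      (fun j : Fin n => if (j : ℕ) = 1 then 0 else 1) k1
    · simp [hk1]
    · intro j i
      have hD1 : Matrix.transpose D k1 i = if (i : ℕ) = 1 then 1 else 0 := by
        by_cases h : i = k1
        · simp [hD, Matrix.transpose_apply, h, hk1]
        · have : (i : ℕ) ≠ 1 := by
            intro hc; exact h (Fin.ext (by simp [hk1, hc]))
          simp [hD, Matrix.transpose_apply, Matrix.diagonal_apply_ne _ h, this]
      rw [hD1]
      simp only [Matrix.transpose_apply, hC, hD, Matrix.diagonal_apply, Matrix.transpose, Matrix.of_apply]
      have hij : i = j ↔ (i : ℕ) = (j : ℕ) := Fin.ext_iff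
      by_cases hi : (i : ℕ) = 0 <;> by_cases hi1 : (i : ℕ) = 1 <;>
        by_cases hj1 : (j : ℕ) = 1 <;> simp_all <;> omega
  have hDdet : D.det = -1 := by
    rw [hD, Matrix.det_diagonal]
    rw [Finset.prod_eq_single k0]
    · simp [hk0]
    · intro b _ hb
      have : (b : ℕ) ≠ 0 := by
        intro hc; exact hb (Fin.ext (by simp [hk0, hc]))
      simp [this]
    · simp
  rw [hAB, hBC, hCD, hDdet]
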